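/- Let f : ℝ^n → ℝ be continuous with f(0) = 0, f(x) < 0 for all x in a closed set Z ∖ {0} with 0 ∈ Z, and suppose the superlevel sets {f ≥ a} are compact for all a ∈ ℝ. Fix M ≥ sup{|f(x)| + |∇f(x)| : x ∈ closedBall(0, 2r)} (f being C¹ there). For λ > 0 set g_λ(x,y) := f(y) − λ|x − y|⁴ and let (x_λ, y_λ) ∈ Z × ℝ^n be a maximizer of g_λ over Z × ℝ^n. Then |x_λ − y_λ|⁴ ≤ M/λ, and x_λ → 0 and y_λ → 0 as λ → ∞. -/
import Mathlib


open Filter Metric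

/-- The doubling-of-variables construction in the proof of Proposition 3.1:
maximizers `(x_λ, y_λ)` of `g_λ(x,y) = f(y) − λ|x−y|⁴` over `Z × ℝⁿ` satisfy
`|x_λ − y_λ|⁴ ≤ M/λ` and converge to `0` as `λ → ∞`. -/
theorem doubling_of_variables {n : ℕ}
    (f : EuclideanSpace ℝ (Fin n) → ℝ) (hf : Differentiable ℝ f)
    (Z : Set (EuclideanSpace ℝ (Fin n))) (hZ : IsClosed Z)
    (h0Z : (0 : EuclideanSpace ℝ (Fin n)) ∈ Z) (hf0 : f 0 = 0)
    (hneg : ∀ x ∈ Z, x ≠ 0 → f x < 0)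
    (hcompact : ∀ a : ℝ, IsCompact {x : EuclideanSpace ℝ (Fin n) | a ≤ f x})
    (r δ M : ℝ) (hr : 0 < r) (hδ : 0 < δ)
    (hout : ∀ x : EuclideanSpace ℝ (Fin n), x ∉ ball (0 : EuclideanSpace ℝ (Fin n)) r →
      f x < -δ)
    (hM : ∀ x ∈ closedBall (0 : EuclideanSpace ℝ (Fin n)) (2 * r),
      |f x| + ‖gradient f x‖ ≤ M)
    (x y : ℝ → EuclideanSpace ℝ (Fin n))
    (hxZ : ∀ l : ℝ, 0 < l → x l ∈ Z)
    (hmaximizer : ∀ l : ℝ, 0 < l → ∀ x' ∈ Z, ∀ y' : EuclideanSpace ℝ (Fin n),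
      f y' - l * ‖x' - y'‖ ^ 4 ≤ f (y l) - l * ‖x l - y l‖ ^ 4) :
    (∀ l : ℝ, 0 < l → ‖x l - y l‖ ^ 4 ≤ M / l) ∧
    Tendsto x atTop (nhds 0) ∧ Tendsto y atTop (nhds 0) := by
  have hfc : Continuous f := hf.continuous
  -- basic estimate from the maximizer property tested at (0,0)
  have key : ∀ l : ℝ, 0 < l → 0 ≤ f (y l) - l * ‖x l - y l‖ ^ 4 := by
    intro l hl
    have h := hmaximizer l hl 0 h0Z 0
    simpa [hf0] using h
  have hfy : ∀ l : ℝ, 0 < l → 0 ≤ f (y l) := by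
    intro l hl
    have h1 := key l hl
    nlinarith [pow_nonneg (norm_nonneg (x l - y l)) 4, hl.le,
      mul_nonneg hl.le (pow_nonneg (norm_nonneg (x l - y l)) 4)]
  have hyball : ∀ l : ℝ, 0 < l → ‖y l‖ < r := by
    intro l hl
    by_contra h
    have hnot : y l ∉ ball (0 : EuclideanSpace ℝ (Fin n)) r := by
      simpa [mem_ball, dist_zero_right] using h
    have := hout _ hnot
    have := hfy l hl
    linarith
  have hM0 : 0 ≤ M := by
    have h := hM 0 (by simp [mem_closedBall]; positivity)
    have h0 : |f 0| = 0 := by simp [hf0]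
    nlinarith [norm_nonneg (gradient f 0)]
  have hy2r : ∀ l : ℝ, 0 < l →
      y l ∈ closedBall (0 : EuclideanSpace ℝ (Fin n)) (2 * r) := by
    intro l hl
    have := hyball l hl
    simp only [mem_closedBall, dist_zero_right]
    linarith
  have hfyM : ∀ l : ℝ, 0 < l → f (y l) ≤ M := by
    intro l hl
    have h1 := hM _ (hy2r l hl)
    have h2 := le_abs_self (f (y l))
    nlinarith [norm_nonneg (gradient f (y l))]
  have part1 : ∀ l : ℝ, 0 < l → ‖x l - y l‖ ^ 4 ≤ M / l := by
    intro l hl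
    rw [le_div_iff₀ hl]
    have h1 := key l hl
    have h2 := hfyM l hl
    nlinarith
  -- from part1: a quantitative bound on the distance
  have hdle : ∀ K l : ℝ, 0 < K → 0 < l → M / K ^ 4 ≤ l → ‖x l - y l‖ ≤ K := by
    intro K l hK hlpos hKl
    have hd4 := part1 l hlpos
    have hMK : M ≤ l * K ^ 4 := (div_le_iff₀ (pow_pos hK 4)).1 hKl
    have h1 : M / l ≤ K ^ 4 := by
      rw [div_le_iff₀ hlpos]; nlinarith
    exact le_of_pow_le_pow_left₀ (by norm_num) hK.le (hd4.trans h1)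
  -- gradient norm equals fderiv norm
  have hgradnorm : ∀ v, ‖gradient f v‖ = ‖fderiv ℝ f v‖ := by
    intro v
    simp [gradient]
  -- Lipschitz estimate on the closed ball of radius 2r
  have hlip : ∀ u ∈ closedBall (0 : EuclideanSpace ℝ (Fin n)) (2 * r),
      ∀ v ∈ closedBall (0 : EuclideanSpace ℝ (Fin n)) (2 * r),
      ‖f v - f u‖ ≤ M * ‖v - u‖ := by
    intro u hu v hv
    refine (convex_closedBall _ _).norm_image_sub_le_of_norm_fderiv_le
      (fun w _ => hf.differentiableAt) (fun w hw => ?_) hu hv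
    have h := hM w hw
    rw [← hgradnorm]
    nlinarith [abs_nonneg (f w)]
  -- for each ε there is η such that points of Z where f > -η lie in ball 0 ε
  have heta : ∀ ε : ℝ, 0 < ε → ∃ η : ℝ, 0 < η ∧
      ∀ v ∈ Z, -η < f v → ‖v‖ < ε := by
    intro ε hε
    set E : Set (EuclideanSpace ℝ (Fin n)) :=
      {v | v ∈ Z ∧ -δ ≤ f v ∧ ε ≤ ‖v‖} with hEdef
    have hEclosed : IsClosed E := by
      apply IsClosed.inter hZ
      exact (isClosed_le continuous_const hfc).inter
        (isClosed_le continuous_const continuous_norm)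
    have hEsub : E ⊆ {v : EuclideanSpace ℝ (Fin n) | -δ ≤ f v} := fun v hv => hv.2.1
    have hEcomp : IsCompact E := (hcompact (-δ)).of_isClosed_subset hEclosed hEsub
    rcases Set.eq_empty_or_nonempty E with hE | hE
    · refine ⟨δ, hδ, fun v hv hfv => ?_⟩
      by_contra h
      have : v ∈ E := ⟨hv, hfv.le, le_of_not_gt h⟩
      rw [hE] at this
      exact this
    · obtain ⟨v₀, hv₀E, hmax⟩ := hEcomp.exists_isMaxOn hE hfc.continuousOn
      have hv₀ne : v₀ ≠ 0 := by
        intro h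
        have := hv₀E.2.2
        rw [h, norm_zero] at this
        linarith
      have hfv₀ : f v₀ < 0 := hneg v₀ hv₀E.1 hv₀ne
      refine ⟨-f v₀, by linarith, fun v hv hfv => ?_⟩
      by_contra h
      have hvE : v ∈ E := ⟨hv, by linarith [hv₀E.2.1], le_of_not_gt h⟩
      have := hmax hvE
      simp only [neg_neg] at hfv
      exact absurd this (not_le.2 hfv)
  -- Tendsto x
  have htx : Tendsto x atTop (nhds 0) := by
    rw [Metric.tendsto_nhds]
    intro ε hε
    obtain ⟨η, hη, hηprop⟩ := heta ε hε
    set c := η / (M + 1) with hc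
    have hcpos : 0 < c := div_pos hη (by linarith)
    refine eventually_atTop.2 ⟨max 1 (max (M / r ^ 4) (M / c ^ 4)), fun l hl => ?_⟩
    have hl1 : (1 : ℝ) ≤ l := le_trans (le_max_left _ _) hl
    have hlpos : (0 : ℝ) < l := lt_of_lt_of_le one_pos hl1
    have hdr : ‖x l - y l‖ ≤ r :=
      hdle r l hr hlpos (le_trans (le_trans (le_max_left _ _) (le_max_right _ _)) hl)
    have hdc : ‖x l - y l‖ ≤ c :=
      hdle c l hcpos hlpos (le_trans (le_trans (le_max_right _ _) (le_max_right _ _)) hl)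
    have hyb := hyball l hlpos
    have hx2r : x l ∈ closedBall (0 : EuclideanSpace ℝ (Fin n)) (2 * r) := by
      simp only [mem_closedBall, dist_zero_right]
      calc ‖x l‖ = ‖(x l - y l) + y l‖ := by rw [sub_add_cancel]
        _ ≤ ‖x l - y l‖ + ‖y l‖ := norm_add_le _ _
        _ ≤ r + r := by linarith
        _ = 2 * r := by ring
    have hlipxy := hlip (y l) (hy2r l hlpos) (x l) hx2r
    have hfx : -η < f (x l) := by
      have h1 : f (y l) - f (x l) ≤ M * ‖x l - y l‖ := by
        have := abs_le.1 (by simpa [Real.norm_eq_abs] using hlipxy)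
        linarith [this.1]
      have h2 : M * ‖x l - y l‖ ≤ M * c := mul_le_mul_of_nonneg_left hdc hM0
      have h3 : M * c < η := by
        rw [hc]
        rw [div_eq_mul_inv, ← mul_assoc]
        have : M * η < (M + 1) * η := by nlinarith
        calc M * η * (M + 1)⁻¹ < (M + 1) * η * (M + 1)⁻¹ := by
              apply mul_lt_mul_of_pos_right this
              positivity
          _ = η := by field_simp
      have h4 := hfy l hlpos
      linarith
    have := hηprop (x l) (hxZ l hlpos) hfx
    simpa [dist_zero_right] using this
  -- Tendsto of the difference
  have hdiff : Tendsto (fun l => y l - x l) atTop (nhds 0) := by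
    rw [Metric.tendsto_nhds]
    intro ε hε
    have hε2 : 0 < ε / 2 := by linarith
    refine eventually_atTop.2 ⟨max 1 (M / (ε / 2) ^ 4), fun l hl => ?_⟩
    have hl1 : (1 : ℝ) ≤ l := le_trans (le_max_left _ _) hl
    have hlpos : (0 : ℝ) < l := lt_of_lt_of_le one_pos hl1
    have hd := hdle (ε / 2) l hε2 hlpos (le_trans (le_max_right _ _) hl)
    have : ‖y l - x l‖ = ‖x l - y l‖ := norm_sub_rev _ _
    rw [dist_zero_right]
    linarith
  refine ⟨part1, htx, ?_⟩
  have := htx.add hdiff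
  simpa using this
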